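/- Let 0 < a < b, λ ∈ [0,1], q > 1 and 1/p + 1/q = 1. With H = 2ab/(a+b), G = √(ab), and A(x,y) = (x+y)/2, the following inequality holds: |(1−λ)·H² + λ·A(a²,b²) − G²| ≤ ( ab(b−a)·C₄(λ,p)^{1/p} / (2·[(1−q)(1−2q)(b−a)²]^{1/q}) )·{ ( C₅(q;a,b)·a^q + C₆(q;a,b)·b^q )^{1/q} + ( C₆(q;b,a)·a^q + C₅(q;b,a)·b^q )^{1/q} }. -/

import Mathlib

open MeasureTheory Set

/-- `C₄(λ, p)` from Theorem 2.4. -/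
noncomputable def C4 (lam p : ℝ) : ℝ := (lam ^ (p + 1) + (1 - lam) ^ (p + 1)) / (p + 1)

/-- `C₅(q; u, ϑ)` from Theorem 2.4. -/
noncomputable def C5 (q u v : ℝ) : ℝ :=
  ((u + v) / 2) ^ (1 - 2 * q) * ((v - 3 * u) / 2 - q * (v - u)) + u ^ (2 - 2 * q)

/-- `C₆(q; u, ϑ)` from Theorem 2.4. -/
noncomputable def C6 (q u v : ℝ) : ℝ :=
  ((u + v) / 2) ^ (1 - 2 * q) * ((3 * v - u) / 2 - q * (v - u))
    + u ^ (1 - 2 * q) * (u - 2 * v + 2 * q * (v - u))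

section Aux
open intervalIntegral


lemma memLp_of_contOn {lo hi : ℝ} {f : ℝ → ℝ} (hle : lo ≤ hi) (r : ℝ)
    (hf : ContinuousOn f (Icc lo hi)) :
    MemLp f (ENNReal.ofReal r) (volume.restrict (Ioc lo hi)) := by
  obtain ⟨C, hC⟩ := (isCompact_Icc (a := lo) (b := hi)).exists_bound_of_continuousOn hf
  refine MemLp.of_bound ?_ C ?_
  · exact (hf.mono Ioc_subset_Icc_self).aestronglyMeasurable measurableSet_Ioc
  · refine (ae_restrict_iff' measurableSet_Ioc).2 (ae_of_all _ fun x hx => ?_)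
    exact hC x (Ioc_subset_Icc_self hx)

lemma holder_interval {lo hi : ℝ} (hle : lo ≤ hi) {p q : ℝ} (hpq : p.HolderConjugate q)
    {f g : ℝ → ℝ} (hf : ContinuousOn f (Icc lo hi)) (hg : ContinuousOn g (Icc lo hi))
    (hf0 : ∀ t ∈ Icc lo hi, 0 ≤ f t) (hg0 : ∀ t ∈ Icc lo hi, 0 ≤ g t) :
    ∫ t in lo..hi, f t * g t ≤
      (∫ t in lo..hi, f t ^ p) ^ (1/p) * (∫ t in lo..hi, g t ^ q) ^ (1/q) := by
  rw [integral_of_le hle, integral_of_le hle, integral_of_le hle]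
  exact integral_mul_le_Lp_mul_Lq_of_nonneg hpq
    ((ae_restrict_iff' measurableSet_Ioc).2 (ae_of_all _ fun x hx => hf0 x (Ioc_subset_Icc_self hx)))
    ((ae_restrict_iff' measurableSet_Ioc).2 (ae_of_all _ fun x hx => hg0 x (Ioc_subset_Icc_self hx)))
    (memLp_of_contOn hle p hf) (memLp_of_contOn hle q hg)


/-- antiderivative for the cubic kernel: G t = K*(B-2*u t)/(2*e^2*(u t)^2),
    u t = b - e*t, K arbitrary const, B = b - d*e. -/
lemma kernel_integral {a b : ℝ} (ha : 0 < a) (hab : a < b) (d lo hi : ℝ)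
    (hlo : 0 ≤ lo) (hhi : hi ≤ 1) (hlh : lo ≤ hi) :
    ∫ t in lo..hi, (t - d) * (2*(a*b)^2*(b-a) / (b - (b-a)*t)^3) =
      (fun t => (a*b)^2*((b - d*(b-a)) - 2*(b - (b-a)*t))/((b-a)*(b - (b-a)*t)^2)) hi
      - (fun t => (a*b)^2*((b - d*(b-a)) - 2*(b - (b-a)*t))/((b-a)*(b - (b-a)*t)^2)) lo := by
  have he : (0:ℝ) < b - a := by linarith
  have hu : ∀ t ∈ uIcc lo hi, 0 < b - (b-a)*t := by
    intro t ht
    rw [uIcc_of_le hlh] at ht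
    nlinarith [ht.1, ht.2]
  apply integral_eq_sub_of_hasDerivAt
  · intro t ht
    have hut : 0 < b - (b-a)*t := hu t ht
    have h1 : HasDerivAt (fun t : ℝ => b - (b-a)*t) (-(b-a)) t := by
      simpa using ((hasDerivAt_id t).const_mul (b-a)).const_sub b
    have h2 : HasDerivAt (fun t : ℝ => (a*b)^2*((b - d*(b-a)) - 2*(b - (b-a)*t))/((b-a)*(b - (b-a)*t)^2))
        ((t - d) * (2*(a*b)^2*(b-a) / (b - (b-a)*t)^3)) t := by
      have hnum : HasDerivAt (fun t : ℝ => (a*b)^2*((b - d*(b-a)) - 2*(b - (b-a)*t)))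
          ((a*b)^2*(2*(b-a))) t := by
        have := ((h1.const_mul (2:ℝ)).const_sub (b - d*(b-a))).const_mul ((a*b)^2)
        refine this.congr_deriv ?_
        ring
      have hden : HasDerivAt (fun t : ℝ => (b-a)*(b - (b-a)*t)^2)
          ((b-a)*(2*(b - (b-a)*t)*(-(b-a)))) t := by
        simpa using ((h1.pow 2).const_mul (b-a))
      have hden0 : (b-a)*(b - (b-a)*t)^2 ≠ 0 := by positivity
      have := hnum.div hden hden0
      refine this.congr_deriv ?_
      field_simp
      ring
    exact h2
  · apply ContinuousOn.intervalIntegrable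
    apply ContinuousOn.mul (by fun_prop)
    apply ContinuousOn.div continuousOn_const (by fun_prop)
    intro t ht
    exact pow_ne_zero _ (ne_of_gt (hu t ht))


/-- antiderivative for the rpow weight integral.
    ∫ (α+βt)·(b-e·t)^(-2q) with G t = (β·u^(2-2q)/(2-2q) - (αe+βb)·u^(1-2q)/(1-2q))/e². -/
lemma weight_integral {a b : ℝ} (ha : 0 < a) (hab : a < b) {q : ℝ} (hq : 1 < q)
    (al be lo hi : ℝ) (hlo : 0 ≤ lo) (hhi : hi ≤ 1) (hlh : lo ≤ hi) :
    ∫ t in lo..hi, (al + be*t) * (b - (b-a)*t) ^ (-(2*q)) =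
      (fun t => (be*(b - (b-a)*t)^(2-2*q)/(2-2*q)
        - (al*(b-a)+be*b)*(b - (b-a)*t)^(1-2*q)/(1-2*q))/(b-a)^2) hi
      - (fun t => (be*(b - (b-a)*t)^(2-2*q)/(2-2*q)
        - (al*(b-a)+be*b)*(b - (b-a)*t)^(1-2*q)/(1-2*q))/(b-a)^2) lo := by
  have he : (0:ℝ) < b - a := by linarith
  have hu : ∀ t ∈ uIcc lo hi, 0 < b - (b-a)*t := by
    intro t ht
    rw [uIcc_of_le hlh] at ht
    nlinarith [ht.1, ht.2, hlo, hhi]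
  apply integral_eq_sub_of_hasDerivAt
  · intro t ht
    have hut : 0 < b - (b-a)*t := hu t ht
    have h1 : HasDerivAt (fun t : ℝ => b - (b-a)*t) (-(b-a)) t := by
      simpa using ((hasDerivAt_id t).const_mul (b-a)).const_sub b
    -- derivative of u^r  is r*u^(r-1)*(-(b-a))
    have hr2 : HasDerivAt (fun t : ℝ => (b - (b-a)*t)^(2-2*q))
        ((2-2*q) * (b - (b-a)*t)^(2-2*q-1) * (-(b-a))) t :=
      ((Real.hasDerivAt_rpow_const (p := 2-2*q) (Or.inl (ne_of_gt hut))).comp t h1 :)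
    have hr1 : HasDerivAt (fun t : ℝ => (b - (b-a)*t)^(1-2*q))
        ((1-2*q) * (b - (b-a)*t)^(1-2*q-1) * (-(b-a))) t :=
      ((Real.hasDerivAt_rpow_const (p := 1-2*q) (Or.inl (ne_of_gt hut))).comp t h1 :)
    have H : HasDerivAt (fun t : ℝ => (be*(b - (b-a)*t)^(2-2*q)/(2-2*q)
        - (al*(b-a)+be*b)*(b - (b-a)*t)^(1-2*q)/(1-2*q))/(b-a)^2)
        ((be*((2-2*q) * (b - (b-a)*t)^(2-2*q-1) * (-(b-a)))/(2-2*q)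
        - (al*(b-a)+be*b)*((1-2*q) * (b - (b-a)*t)^(1-2*q-1) * (-(b-a)))/(1-2*q))/(b-a)^2) t := by
      exact (((hr2.const_mul be).div_const (2-2*q)).sub
        ((hr1.const_mul (al*(b-a)+be*b)).div_const (1-2*q))).div_const ((b-a)^2)
    refine H.congr_deriv ?_
    have h2q : (2-2*q) ≠ 0 := by intro h; nlinarith
    have h1q : (1-2*q) ≠ 0 := by intro h; nlinarith
    have h1q' : (1-q) ≠ 0 := by intro h; nlinarith
    have e1 : (b - (b-a)*t)^(2-2*q-1) = (b - (b-a)*t) * (b - (b-a)*t)^(-(2*q)) := by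
      rw [← Real.rpow_one_add' (le_of_lt hut) (by intro h; nlinarith)]
      ring_nf
    have e2 : (b - (b-a)*t)^(1-2*q-1) = (b - (b-a)*t)^(-(2*q)) := by
      norm_num
    rw [e1, e2]
    field_simp
    ring
  · apply ContinuousOn.intervalIntegrable
    apply ContinuousOn.mul (by fun_prop)
    apply ContinuousOn.rpow_const (by fun_prop)
    intro t ht
    exact Or.inl (ne_of_gt (hu t ht))


lemma rpow_kernel_right {c hi p : ℝ} (hp : 1 < p) (hc : c ≤ hi) :
    ∫ t in c..hi, |t - c| ^ p = (hi - c)^(p+1)/(p+1) := by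
  have h : ∫ t in c..hi, |t - c| ^ p = ∫ t in c..hi, (t - c) ^ p := by
    apply integral_congr
    intro t ht
    rw [uIcc_of_le hc] at ht
    show |t - c| ^ p = (t - c) ^ p
    rw [abs_of_nonneg (by linarith [ht.1])]
  have key := integral_eq_sub_of_hasDerivAt (a := c) (b := hi)
      (f := fun t => (t-c)^(p+1)/(p+1)) (f' := fun t => (t - c) ^ p) ?_ ?_
  · rw [h, key]
    simp [Real.zero_rpow (by positivity : p + 1 ≠ 0)]
  · intro t ht
    have := (Real.hasDerivAt_rpow_const (p := p+1) (x := t - c)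
      (Or.inr (by linarith))).comp t (h := fun t => t - c) (by simpa using (hasDerivAt_id t).sub_const c)
    have H := this.div_const (p+1)
    refine H.congr_deriv ?_
    have h2 : p + 1 - 1 = p := by ring
    rw [h2]
    field_simp
  · apply ContinuousOn.intervalIntegrable
    apply ContinuousOn.rpow_const (by fun_prop)
    intro t ht
    exact Or.inr (by linarith)

lemma rpow_kernel_left {c lo p : ℝ} (hp : 1 < p) (hc : lo ≤ c) :
    ∫ t in lo..c, |t - c| ^ p = (c - lo)^(p+1)/(p+1) := by
  have h : ∫ t in lo..c, |t - c| ^ p = ∫ t in lo..c, (c - t) ^ p := by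
    apply integral_congr
    intro t ht
    rw [uIcc_of_le hc] at ht
    show |t - c| ^ p = (c - t) ^ p
    rw [abs_of_nonpos (by linarith [ht.2]), neg_sub]
  have key := integral_eq_sub_of_hasDerivAt (a := lo) (b := c)
      (f := fun t => -((c-t)^(p+1)/(p+1))) (f' := fun t => (c - t) ^ p) ?_ ?_
  · rw [h, key]
    simp [Real.zero_rpow (by positivity : p + 1 ≠ 0)]
  · intro t ht
    have h1 : HasDerivAt (fun t : ℝ => c - t) (-1) t := by
      simpa using (hasDerivAt_id t).const_sub c
    have := (Real.hasDerivAt_rpow_const (p := p+1) (x := c - t)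
      (Or.inr (by linarith))).comp t h1
    have H := (this.div_const (p+1)).neg
    refine H.congr_deriv ?_
    have h2 : p + 1 - 1 = p := by ring
    rw [h2]
    field_simp
  · apply ContinuousOn.intervalIntegrable
    apply ContinuousOn.rpow_const (by fun_prop)
    intro t ht
    exact Or.inr (by linarith)

lemma rpow_kernel_integral {lo hi c p : ℝ} (hp : 1 < p) (h1 : lo ≤ c) (h2 : c ≤ hi) :
    ∫ t in lo..hi, |t - c| ^ p = ((c - lo)^(p+1) + (hi - c)^(p+1))/(p+1) := by
  have hint : ∀ x y : ℝ, IntervalIntegrable (fun t => |t - c| ^ p) MeasureTheory.volume x y := by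
    intro x y
    apply ContinuousOn.intervalIntegrable
    apply ContinuousOn.rpow_const (by fun_prop)
    intro t _
    rcases eq_or_ne (t - c) 0 with h | h
    · exact Or.inr (by linarith)
    · exact Or.inl (abs_ne_zero.mpr h)
  rw [← integral_add_adjacent_intervals (b := c) (hint lo c) (hint c hi),
    rpow_kernel_left hp h1, rpow_kernel_right hp h2]
  ring

end Aux

set_option maxHeartbeats 2000000 in
theorem prop_means6 (a b : ℝ) (ha : 0 < a) (hab : a < b)
    (lam : ℝ) (hlam : lam ∈ Icc (0:ℝ) 1)
    (p q : ℝ) (hq : 1 < q) (hpq : 1 / p + 1 / q = 1) :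
    |(1 - lam) * (2 * a * b / (a + b)) ^ 2 + lam * ((a ^ 2 + b ^ 2) / 2) -
      Real.sqrt (a * b) ^ 2| ≤
      (a * b * (b - a) * C4 lam p ^ (1 / p) /
          (2 * (((1 - q) * (1 - 2 * q) * (b - a) ^ 2) ^ (1 / q)))) *
        ((C5 q a b * a ^ q + C6 q a b * b ^ q) ^ (1 / q)
          + (C6 q b a * a ^ q + C5 q b a * b ^ q) ^ (1 / q)) := by
  obtain ⟨hl0, hl1⟩ := hlam
  have hb : 0 < b := lt_trans ha hab
  have he : (0:ℝ) < b - a := by linarith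
  have hq0 : 0 < q := by linarith
  have hpinv : 1/p = 1 - 1/q := by linarith
  have hpinv0 : 0 < 1/p := by
    rw [hpinv]
    have : 1/q < 1 := by rw [div_lt_one hq0]; exact hq
    linarith
  have hp0 : 0 < p := by
    by_contra h
    push_neg at h
    have h2 : 1/p ≤ 0 := div_nonpos_of_nonneg_of_nonpos (by norm_num) h
    linarith
  have hp1 : 1 < p := by
    have h1 : 1/p < 1 := by
      rw [hpinv]
      have : 0 < 1/q := by positivity
      linarith
    rw [div_lt_one hp0] at h1
    exact h1
  have hcon : p.HolderConjugate q := ⟨by simpa [one_div] using hpq, hp0, hq0⟩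
  set c : ℝ := lam / 2 with hcdef
  have hc0 : 0 ≤ c := by positivity
  have hc12 : c ≤ 1/2 := by rw [hcdef]; linarith
  -- positivity of u on [0,1]
  have hA : ∀ t ∈ Icc (0:ℝ) 1, 0 < b - (b-a)*t := by
    intro t ht; nlinarith [ht.1, ht.2]

  have hsub1 : Icc (0:ℝ) (1/2) ⊆ Icc (0:ℝ) 1 := Icc_subset_Icc (le_refl _) (by norm_num)
  have hsub2 : Icc (1/2:ℝ) 1 ⊆ Icc (0:ℝ) 1 := Icc_subset_Icc (by norm_num) (le_refl _)
  have hab2 : (0:ℝ) < a + b := by linarith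
  have hm : (0:ℝ) < (a+b)/2 := by linarith
  -- Step A : the integral identity
  have hI1 := kernel_integral ha hab c 0 (1/2) (by norm_num) (by norm_num) (by norm_num)
  have hI2 := kernel_integral ha hab (1-c) (1/2) 1 (by norm_num) (by norm_num) (by norm_num)
  have hM : (1 - lam) * (2 * a * b / (a + b)) ^ 2 + lam * ((a ^ 2 + b ^ 2) / 2) - a*b
      = (∫ t in (0:ℝ)..(1/2), (t - c) * (2*(a*b)^2*(b-a) / (b - (b-a)*t)^3))
        + ∫ t in (1/2:ℝ)..(1:ℝ), (t - (1-c)) * (2*(a*b)^2*(b-a) / (b - (b-a)*t)^3) := by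
    rw [hI1, hI2]
    simp only
    rw [show b - (b-a)*(0:ℝ) = b by ring, show b - (b-a)*(1/2:ℝ) = (a+b)/2 by ring,
      show b - (b-a)*(1:ℝ) = a by ring, hcdef]
    have h1 : a ≠ 0 := ne_of_gt ha
    have h2 : b ≠ 0 := ne_of_gt hb
    have h3 : b - a ≠ 0 := ne_of_gt he
    have h4 : a + b ≠ 0 := ne_of_gt hab2
    field_simp
    ring
  -- nonnegativity of W
  have hW0 : ∀ t ∈ Icc (0:ℝ) 1, 0 ≤ 2*(a*b)^2*(b-a) / (b - (b-a)*t)^3 := by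
    intro t ht
    have := hA t ht
    positivity
  -- Step B : abs bounds
  have habs1 : |∫ t in (0:ℝ)..(1/2), (t - c) * (2*(a*b)^2*(b-a) / (b - (b-a)*t)^3)|
      ≤ ∫ t in (0:ℝ)..(1/2), |t - c| * (2*(a*b)^2*(b-a) / (b - (b-a)*t)^3) := by
    refine le_trans (intervalIntegral.abs_integral_le_integral_abs (by norm_num)) (le_of_eq ?_)
    apply intervalIntegral.integral_congr
    intro t ht
    rw [uIcc_of_le (by norm_num : (0:ℝ) ≤ 1/2)] at ht
    simp only
    rw [abs_mul, abs_of_nonneg (hW0 t (hsub1 ht))]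
  have habs2 : |∫ t in (1/2:ℝ)..(1:ℝ), (t - (1-c)) * (2*(a*b)^2*(b-a) / (b - (b-a)*t)^3)|
      ≤ ∫ t in (1/2:ℝ)..(1:ℝ), |t - (1-c)| * (2*(a*b)^2*(b-a) / (b - (b-a)*t)^3) := by
    refine le_trans (intervalIntegral.abs_integral_le_integral_abs (by norm_num)) (le_of_eq ?_)
    apply intervalIntegral.integral_congr
    intro t ht
    rw [uIcc_of_le (by norm_num : (1/2:ℝ) ≤ 1)] at ht
    simp only
    rw [abs_mul, abs_of_nonneg (hW0 t (hsub2 ht))]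
  -- Step C : Hölder on each half
  have hcontW1 : ContinuousOn (fun t : ℝ => 2*(a*b)^2*(b-a) / (b - (b-a)*t)^3) (Icc (0:ℝ) (1/2)) := by
    apply ContinuousOn.div continuousOn_const (by fun_prop)
    intro t ht
    exact pow_ne_zero _ (ne_of_gt (hA t (hsub1 ht)))
  have hcontW2 : ContinuousOn (fun t : ℝ => 2*(a*b)^2*(b-a) / (b - (b-a)*t)^3) (Icc (1/2:ℝ) 1) := by
    apply ContinuousOn.div continuousOn_const (by fun_prop)
    intro t ht
    exact pow_ne_zero _ (ne_of_gt (hA t (hsub2 ht)))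
  have hH1 := holder_interval (by norm_num : (0:ℝ) ≤ 1/2) hcon
    (f := fun t => |t - c|) (g := fun t : ℝ => 2*(a*b)^2*(b-a) / (b - (b-a)*t)^3)
    (by fun_prop) hcontW1 (fun t _ => abs_nonneg _) (fun t ht => hW0 t (hsub1 ht))
  have hH2 := holder_interval (by norm_num : (1/2:ℝ) ≤ 1) hcon
    (f := fun t => |t - (1-c)|) (g := fun t : ℝ => 2*(a*b)^2*(b-a) / (b - (b-a)*t)^3)
    (by fun_prop) hcontW2 (fun t _ => abs_nonneg _) (fun t ht => hW0 t (hsub2 ht))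

  -- Step D : pointwise bound on W^q
  have hptw : ∀ t ∈ Icc (0:ℝ) 1, (2*(a*b)^2*(b-a) / (b - (b-a)*t)^3) ^ q
      ≤ (2*a*b*(b-a))^q * (((1-t)*a^q + t*b^q) * (b - (b-a)*t) ^ (-(2*q))) := by
    intro t ht
    have hut := hA t ht
    have h1 : a*b/(b - (b-a)*t) ≤ (1-t)*a + t*b := by
      rw [div_le_iff₀ hut]
      have key : ((1-t)*a+t*b)*(b-(b-a)*t) - a*b = t*(1-t)*(b-a)^2 := by ring
      have hnn : 0 ≤ t*(1-t)*(b-a)^2 :=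
        mul_nonneg (mul_nonneg ht.1 (by linarith [ht.2] : (0:ℝ) ≤ 1 - t)) (sq_nonneg (b-a))
      linarith
    have h2 : (a*b/(b - (b-a)*t))^q ≤ ((1-t)*a + t*b)^q :=
      Real.rpow_le_rpow (by positivity) h1 hq0.le
    have h3 : ((1-t)*a + t*b)^q ≤ (1-t)*a^q + t*b^q := by
      have hcv := (convexOn_rpow hq.le).2 (mem_Ici.mpr ha.le) (mem_Ici.mpr hb.le)
        (by linarith [ht.2] : (0:ℝ) ≤ 1 - t) ht.1 (by ring)
      simpa [smul_eq_mul] using hcv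
    have hxW : 2*(a*b)^2*(b-a) / (b - (b-a)*t)^3
        = (2*a*b*(b-a)) * ((a*b/(b - (b-a)*t)) * ((b - (b-a)*t) ^ ((-2 : ℝ)))) := by
      have hiv : (b - (b-a)*t) ^ ((-2):ℝ) = ((b - (b-a)*t)^(2:ℕ))⁻¹ := by
        rw [show ((-2):ℝ) = -((2:ℕ):ℝ) by norm_num, Real.rpow_neg hut.le, Real.rpow_natCast]
      rw [hiv]
      field_simp
    have hstep : (2*(a*b)^2*(b-a) / (b - (b-a)*t)^3) ^ q
        = (2*a*b*(b-a))^q * ((a*b/(b - (b-a)*t))^q * ((b - (b-a)*t) ^ (-(2*q)))) := by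
      rw [hxW, Real.mul_rpow (by positivity) (mul_nonneg (by positivity)
          (Real.rpow_nonneg hut.le _)),
        Real.mul_rpow (by positivity) (Real.rpow_nonneg hut.le _),
        ← Real.rpow_mul hut.le, show ((-2):ℝ)*q = -(2*q) by ring]
    rw [hstep]
    apply mul_le_mul_of_nonneg_left _ (by positivity)
    apply mul_le_mul_of_nonneg_right (h2.trans h3) (Real.rpow_nonneg hut.le _)

  -- integrability helpers
  have hW3 : ∀ t ∈ Icc (0:ℝ) 1, (0:ℝ) < 2*(a*b)^2*(b-a) / (b - (b-a)*t)^3 := by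
    intro t ht
    have := hA t ht
    positivity
  have hintWq1 : IntervalIntegrable (fun t : ℝ => (2*(a*b)^2*(b-a) / (b - (b-a)*t)^3) ^ q)
      MeasureTheory.volume 0 (1/2) := by
    apply ContinuousOn.intervalIntegrable
    rw [uIcc_of_le (by norm_num : (0:ℝ) ≤ 1/2)]
    exact hcontW1.rpow_const fun t ht => Or.inl (ne_of_gt (hW3 t (hsub1 ht)))
  have hintWq2 : IntervalIntegrable (fun t : ℝ => (2*(a*b)^2*(b-a) / (b - (b-a)*t)^3) ^ q)
      MeasureTheory.volume (1/2) 1 := by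
    apply ContinuousOn.intervalIntegrable
    rw [uIcc_of_le (by norm_num : (1/2:ℝ) ≤ 1)]
    exact hcontW2.rpow_const fun t ht => Or.inl (ne_of_gt (hW3 t (hsub2 ht)))
  have hcontw : ContinuousOn
      (fun t : ℝ => (2*a*b*(b-a))^q * (((1-t)*a^q + t*b^q) * (b - (b-a)*t) ^ (-(2*q))))
      (Icc (0:ℝ) 1) := by
    apply ContinuousOn.mul continuousOn_const
    apply ContinuousOn.mul (by fun_prop)
    exact ContinuousOn.rpow_const (by fun_prop) fun t ht => Or.inl (ne_of_gt (hA t ht))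
  have hintw1 : IntervalIntegrable
      (fun t : ℝ => (2*a*b*(b-a))^q * (((1-t)*a^q + t*b^q) * (b - (b-a)*t) ^ (-(2*q))))
      MeasureTheory.volume 0 (1/2) := by
    apply ContinuousOn.intervalIntegrable
    rw [uIcc_of_le (by norm_num : (0:ℝ) ≤ 1/2)]
    exact hcontw.mono hsub1
  have hintw2 : IntervalIntegrable
      (fun t : ℝ => (2*a*b*(b-a))^q * (((1-t)*a^q + t*b^q) * (b - (b-a)*t) ^ (-(2*q))))
      MeasureTheory.volume (1/2) 1 := by
    apply ContinuousOn.intervalIntegrable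
    rw [uIcc_of_le (by norm_num : (1/2:ℝ) ≤ 1)]
    exact hcontw.mono hsub2
  -- monotone bounds for ∫ W^q
  have hmono1 : (∫ t in (0:ℝ)..(1/2), (2*(a*b)^2*(b-a) / (b - (b-a)*t)^3) ^ q)
      ≤ (2*a*b*(b-a))^q *
        ∫ t in (0:ℝ)..(1/2), ((1-t)*a^q + t*b^q) * (b - (b-a)*t) ^ (-(2*q)) := by
    rw [← intervalIntegral.integral_const_mul]
    exact intervalIntegral.integral_mono_on (by norm_num) hintWq1 hintw1
      fun t ht => hptw t (hsub1 ht)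
  have hmono2 : (∫ t in (1/2:ℝ)..(1:ℝ), (2*(a*b)^2*(b-a) / (b - (b-a)*t)^3) ^ q)
      ≤ (2*a*b*(b-a))^q *
        ∫ t in (1/2:ℝ)..(1:ℝ), ((1-t)*a^q + t*b^q) * (b - (b-a)*t) ^ (-(2*q)) := by
    rw [← intervalIntegral.integral_const_mul]
    exact intervalIntegral.integral_mono_on (by norm_num) hintWq2 hintw2
      fun t ht => hptw t (hsub2 ht)
  -- rewrite the weight integrand to linear form
  have hlin : ∀ t : ℝ, ((1-t)*a^q + t*b^q) = a^q + (b^q - a^q)*t := fun t => by ring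
  -- closed form values
  have hKY := weight_integral ha hab hq (a^q) (b^q - a^q) 0 (1/2)
    (by norm_num) (by norm_num) (by norm_num)
  have hKX := weight_integral ha hab hq (a^q) (b^q - a^q) (1/2) 1
    (by norm_num) (by norm_num) (by norm_num)
  have h2q0 : (2-2*q) ≠ 0 := ne_of_lt (by linarith)
  have h1q0 : (1-2*q) ≠ 0 := ne_of_lt (by linarith)
  have h1q0' : (1-q) ≠ 0 := ne_of_lt (by linarith)
  have em2 : ((a+b)/2) ^ (2-2*q) = ((a+b)/2) * ((a+b)/2) ^ (1-2*q) := by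
    rw [show (2-2*q) = 1+(1-2*q) by ring, Real.rpow_add hm, Real.rpow_one]
  have eb2 : b ^ (2-2*q) = b * b ^ (1-2*q) := by
    rw [show (2-2*q) = 1+(1-2*q) by ring, Real.rpow_add hb, Real.rpow_one]
  have ea2 : a ^ (2-2*q) = a * a ^ (1-2*q) := by
    rw [show (2-2*q) = 1+(1-2*q) by ring, Real.rpow_add ha, Real.rpow_one]
  have hYid : C6 q b a * a ^ q + C5 q b a * b ^ q
      = 2*((q-1)*(2*q-1)*(b-a)^2) *
        ∫ t in (0:ℝ)..(1/2), ((1-t)*a^q + t*b^q) * (b - (b-a)*t) ^ (-(2*q)) := by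
    simp only [hlin]
    rw [hKY]
    simp only
    rw [show b - (b-a)*(1/2:ℝ) = (a+b)/2 by ring, show b - (b-a)*(0:ℝ) = b by ring]
    rw [C5, C6, show ((b+a)/2 : ℝ) = (a+b)/2 by ring, em2, eb2]
    field_simp
    ring
  have hXid : C5 q a b * a ^ q + C6 q a b * b ^ q
      = 2*((q-1)*(2*q-1)*(b-a)^2) *
        ∫ t in (1/2:ℝ)..(1:ℝ), ((1-t)*a^q + t*b^q) * (b - (b-a)*t) ^ (-(2*q)) := by
    simp only [hlin]
    rw [hKX]
    simp only
    rw [show b - (b-a)*(1/2:ℝ) = (a+b)/2 by ring, show b - (b-a)*(1:ℝ) = a by ring]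
    rw [C5, C6, em2, ea2]
    field_simp
    ring

  -- J values
  have hJ1 : ∫ t in (0:ℝ)..(1/2), |t - c| ^ p = (c^(p+1) + (1/2 - c)^(p+1))/(p+1) := by
    have h := rpow_kernel_integral hp1 hc0 hc12
    rwa [sub_zero] at h
  have hJ2 : ∫ t in (1/2:ℝ)..(1:ℝ), |t - (1-c)| ^ p = (c^(p+1) + (1/2 - c)^(p+1))/(p+1) := by
    rw [rpow_kernel_integral hp1 (by linarith : (1/2:ℝ) ≤ 1-c) (by linarith : (1-c:ℝ) ≤ 1),
      show (1-c-1/2:ℝ) = 1/2-c by ring, show (1-(1-c):ℝ) = c by ring]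
    ring
  -- positivity facts
  have hD2 : (0:ℝ) < (q-1)*(2*q-1)*(b-a)^2 :=
    mul_pos (mul_pos (by linarith) (by linarith)) (by positivity)
  have hKYnn : 0 ≤ ∫ t in (0:ℝ)..(1/2), ((1-t)*a^q + t*b^q) * (b - (b-a)*t) ^ (-(2*q)) := by
    apply intervalIntegral.integral_nonneg (by norm_num)
    intro t ht
    have h1 : (0:ℝ) ≤ 1 - t := by linarith [ht.2]
    exact mul_nonneg (add_nonneg (mul_nonneg h1 (Real.rpow_nonneg ha.le _))
      (mul_nonneg ht.1 (Real.rpow_nonneg hb.le _))) (Real.rpow_nonneg (hA t (hsub1 ht)).le _)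
  have hKXnn : 0 ≤ ∫ t in (1/2:ℝ)..(1:ℝ), ((1-t)*a^q + t*b^q) * (b - (b-a)*t) ^ (-(2*q)) := by
    apply intervalIntegral.integral_nonneg (by norm_num)
    intro t ht
    have h1 : (0:ℝ) ≤ 1 - t := by linarith [ht.2]
    have h2 : (0:ℝ) ≤ t := by linarith [ht.1]
    exact mul_nonneg (add_nonneg (mul_nonneg h1 (Real.rpow_nonneg ha.le _))
      (mul_nonneg h2 (Real.rpow_nonneg hb.le _))) (Real.rpow_nonneg (hA t (hsub2 ht)).le _)
  have hYnn : 0 ≤ C6 q b a * a ^ q + C5 q b a * b ^ q := by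
    rw [hYid]
    exact mul_nonneg (by linarith) hKYnn
  have hXnn : 0 ≤ C5 q a b * a ^ q + C6 q a b * b ^ q := by
    rw [hXid]
    exact mul_nonneg (by linarith) hKXnn
  have hS1nn : 0 ≤ ∫ t in (0:ℝ)..(1/2), (2*(a*b)^2*(b-a) / (b - (b-a)*t)^3) ^ q := by
    apply intervalIntegral.integral_nonneg (by norm_num)
    exact fun t ht => Real.rpow_nonneg (hW0 t (hsub1 ht)) _
  have hS2nn : 0 ≤ ∫ t in (1/2:ℝ)..(1:ℝ), (2*(a*b)^2*(b-a) / (b - (b-a)*t)^3) ^ q := by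
    apply intervalIntegral.integral_nonneg (by norm_num)
    exact fun t ht => Real.rpow_nonneg (hW0 t (hsub2 ht)) _
  have habe : (0:ℝ) < 2*a*b*(b-a) := by positivity
  have hpowq : ∀ x : ℝ, 0 ≤ x → (x^q)^(1/q) = x := by
    intro x hx
    rw [← Real.rpow_mul hx, mul_one_div_cancel (ne_of_gt hq0), Real.rpow_one]
  -- rpow bounds on S^{1/q}
  have hstep1 : (∫ t in (0:ℝ)..(1/2), (2*(a*b)^2*(b-a) / (b - (b-a)*t)^3) ^ q) ^ (1/q)
      ≤ (2*a*b*(b-a)) * ((C6 q b a * a ^ q + C5 q b a * b ^ q) / (2*((q-1)*(2*q-1)*(b-a)^2))) ^ (1/q) := by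
    have hdiv : (C6 q b a * a ^ q + C5 q b a * b ^ q) / (2*((q-1)*(2*q-1)*(b-a)^2))
        = ∫ t in (0:ℝ)..(1/2), ((1-t)*a^q + t*b^q) * (b - (b-a)*t) ^ (-(2*q)) := by
      rw [hYid]
      rw [mul_div_cancel_left₀ _ (mul_pos two_pos hD2).ne']
    have h1 := Real.rpow_le_rpow hS1nn (hdiv ▸ hmono1) (by positivity : (0:ℝ) ≤ 1/q)
    rwa [Real.mul_rpow (Real.rpow_nonneg habe.le _) (hdiv ▸ hKYnn), hpowq _ habe.le] at h1
  have hstep2 : (∫ t in (1/2:ℝ)..(1:ℝ), (2*(a*b)^2*(b-a) / (b - (b-a)*t)^3) ^ q) ^ (1/q)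
      ≤ (2*a*b*(b-a)) * ((C5 q a b * a ^ q + C6 q a b * b ^ q) / (2*((q-1)*(2*q-1)*(b-a)^2))) ^ (1/q) := by
    have hdiv : (C5 q a b * a ^ q + C6 q a b * b ^ q) / (2*((q-1)*(2*q-1)*(b-a)^2))
        = ∫ t in (1/2:ℝ)..(1:ℝ), ((1-t)*a^q + t*b^q) * (b - (b-a)*t) ^ (-(2*q)) := by
      rw [hXid]
      rw [mul_div_cancel_left₀ _ (mul_pos two_pos hD2).ne']
    have h1 := Real.rpow_le_rpow hS2nn (hdiv ▸ hmono2) (by positivity : (0:ℝ) ≤ 1/q)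
    rwa [Real.mul_rpow (Real.rpow_nonneg habe.le _) (hdiv ▸ hKXnn), hpowq _ habe.le] at h1

  -- final assembly
  have hJvnn : 0 ≤ (c^(p+1) + (1/2 - c)^(p+1))/(p+1) :=
    div_nonneg (add_nonneg (Real.rpow_nonneg hc0 _)
      (Real.rpow_nonneg (by linarith : (0:ℝ) ≤ 1/2 - c) _)) (by linarith)
  have hKnn : 0 ≤ ((c^(p+1) + (1/2 - c)^(p+1))/(p+1))^(1/p) := Real.rpow_nonneg hJvnn _
  rw [hJ1] at hH1
  rw [hJ2] at hH2
  rw [Real.sq_sqrt (show (0:ℝ) ≤ a*b by positivity), hM]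
  refine le_trans (abs_add_le _ _) ?_
  refine le_trans (add_le_add habs1 habs2) ?_
  refine le_trans (add_le_add hH1 hH2) ?_
  refine le_trans (add_le_add (mul_le_mul_of_nonneg_left hstep1 hKnn)
    (mul_le_mul_of_nonneg_left hstep2 hKnn)) (le_of_eq ?_)
  -- the closing equality
  have hC4nn : 0 ≤ C4 lam p := div_nonneg (add_nonneg (Real.rpow_nonneg hl0 _)
    (Real.rpow_nonneg (by linarith : (0:ℝ) ≤ 1 - lam) _)) (by linarith)
  have hJv : (c^(p+1) + (1/2 - c)^(p+1))/(p+1) = C4 lam p / 2^(p+1) := by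
    rw [C4, hcdef, show (1/2 - lam/2 : ℝ) = (1-lam)/2 by ring,
      Real.div_rpow hl0 (by norm_num : (0:ℝ) ≤ 2),
      Real.div_rpow (by linarith : (0:ℝ) ≤ 1 - lam) (by norm_num : (0:ℝ) ≤ 2)]
    have h2p : (0:ℝ) < 2^(p+1) := Real.rpow_pos_of_pos two_pos _
    rw [← add_div, div_div, div_div, mul_comm]
  have h2p : (0:ℝ) < 2^(p+1) := Real.rpow_pos_of_pos two_pos _
  have hJvp : ((c^(p+1) + (1/2 - c)^(p+1))/(p+1))^(1/p) = C4 lam p^(1/p) / (2*2^(1/p)) := by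
    rw [hJv, Real.div_rpow hC4nn h2p.le, ← Real.rpow_mul (by norm_num : (0:ℝ) ≤ 2),
      show (p+1)*(1/p) = 1 + 1/p by field_simp, Real.rpow_add two_pos, Real.rpow_one]
  have hYdiv : ((C6 q b a * a ^ q + C5 q b a * b ^ q) / (2*((q-1)*(2*q-1)*(b-a)^2)))^(1/q)
      = (C6 q b a * a ^ q + C5 q b a * b ^ q)^(1/q)
        / (2^(1/q) * ((q-1)*(2*q-1)*(b-a)^2)^(1/q)) := by
    rw [Real.div_rpow hYnn (by positivity), Real.mul_rpow (by norm_num : (0:ℝ) ≤ 2) hD2.le]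
  have hXdiv : ((C5 q a b * a ^ q + C6 q a b * b ^ q) / (2*((q-1)*(2*q-1)*(b-a)^2)))^(1/q)
      = (C5 q a b * a ^ q + C6 q a b * b ^ q)^(1/q)
        / (2^(1/q) * ((q-1)*(2*q-1)*(b-a)^2)^(1/q)) := by
    rw [Real.div_rpow hXnn (by positivity), Real.mul_rpow (by norm_num : (0:ℝ) ≤ 2) hD2.le]
  have htq : (0:ℝ) < 2^(1/q) := Real.rpow_pos_of_pos two_pos _
  have hdq : (0:ℝ) < ((q-1)*(2*q-1)*(b-a)^2)^(1/q) := Real.rpow_pos_of_pos hD2 _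
  have hs : (2:ℝ)^(1/p) = 2 / 2^(1/q) := by
    rw [eq_div_iff (ne_of_gt htq), ← Real.rpow_add two_pos, hpq, Real.rpow_one]
  rw [show ((1-q)*(1-2*q)*(b-a)^2 : ℝ) = (q-1)*(2*q-1)*(b-a)^2 by ring]
  rw [hJvp, hYdiv, hXdiv, hs]
  field_simp
  ring
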